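/- arXiv:1703.07528 — 6 statements merged into one kernel-verified Lean document; each statement's English description precedes it below -/
import Mathlib

section
/- Let v* ∈ ℝ satisfy |v* − v̄| ≤ ε, where v̄ is a fixed point of Υ (i.e. Υ(v̄) = v̄) and ε ≥ 0. Then for every t ∈ {0,…,k} and every x ∈ X, |V(x,t,v*) − V(x,t,v̄)| ≤ ε. (This is the accuracy guarantee of the BiDS algorithm: the functions V(·,t,v*) are uniformly within ε of the optimal value functions J(·,t) = V(·,t,v̄).) -/
lemma inf'_abs_le {U : Type*} [Fintype U] [Nonempty U] (f g : U → ℝ) (ε : ℝ)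
    (hfg : ∀ u, |f u - g u| ≤ ε) :
    |Finset.univ.inf' Finset.univ_nonempty f - Finset.univ.inf' Finset.univ_nonempty g| ≤ ε := by
  rw [abs_le]
  constructor
  · rw [neg_le, neg_sub, sub_le_iff_le_add]
    obtain ⟨u, hu, hfu⟩ := Finset.exists_mem_eq_inf' Finset.univ_nonempty f
    calc Finset.univ.inf' Finset.univ_nonempty g ≤ g u := Finset.inf'_le _ (Finset.mem_univ u)
      _ ≤ f u + ε := by have := (abs_le.mp (hfg u)).1; linarith
      _ = ε + Finset.univ.inf' Finset.univ_nonempty f := by rw [hfu]; ring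
  · rw [sub_le_iff_le_add]
    obtain ⟨u, hu, hgu⟩ := Finset.exists_mem_eq_inf' Finset.univ_nonempty g
    calc Finset.univ.inf' Finset.univ_nonempty f ≤ f u := Finset.inf'_le _ (Finset.mem_univ u)
      _ ≤ g u + ε := by have := (abs_le.mp (hfg u)).2; linarith
      _ = ε + Finset.univ.inf' Finset.univ_nonempty g := by rw [hgu]; ring

lemma min_abs_le (a b c d ε : ℝ) (h1 : |a - c| ≤ ε) (h2 : |b - d| ≤ ε) :
    |min a b - min c d| ≤ ε :=
  (abs_min_sub_min_le_max a b c d).trans (max_le h1 h2)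

/-- **BiDS accuracy guarantee.**  If `v*` satisfies `|v* − v̄| ≤ ε` where `v̄` is a fixed
point of `Υ`, then the backward-recursion value functions `V(·, t, v*)` are uniformly
within `ε` of the optimal value functions `J(·,t) = V(·, t, v̄)` for all `t ∈ {0,…,k}`. -/
theorem bids_accuracy
    {W : Type*} [Fintype W] [Nonempty W] (p : W → ℝ)
    (hp : ∀ w, 0 ≤ p w) (hp1 : ∑ w, p w = 1)
    {X : Type*} (ζ : X)
    {U : Type*} [Fintype U] [Nonempty U]
    (k : ℕ) (hk : 1 ≤ k)
    (γ : ℝ) (hγ0 : 0 ≤ γ) (hγ1 : γ < 1)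
    (h : X → ℕ → U → W → X)
    (g : X → ℕ → U → W → ℝ) (hg : ∀ x t u w, 0 ≤ g x t u w)
    (s : X → ℕ → W → ℝ) (hs : ∀ x t w, 0 ≤ s x t w)
    (hsζ : ∀ t w, s ζ t w = 0)
    (V : X → ℕ → ℝ → ℝ)
    (hVk : ∀ x v, V x k v = v + ∑ w, p w * s x k w)
    (hVt : ∀ x t v, t < k →
      V x t v = min (v + ∑ w, p w * s x t w)
        (Finset.univ.inf' Finset.univ_nonempty
          (fun u : U => ∑ w, p w * (g x t u w + γ * V (h x t u w) (t + 1) v))))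
    (Υ : ℝ → ℝ)
    (hΥ : ∀ v, Υ v = Finset.univ.inf' Finset.univ_nonempty
      (fun u : U => ∑ w, p w * (g ζ 0 u w + γ * V (h ζ 0 u w) 1 v)))
    (ε : ℝ) (hε : 0 ≤ ε)
    (vbar : ℝ) (hfix : Υ vbar = vbar)
    (vstar : ℝ) (hclose : |vstar - vbar| ≤ ε) :
    ∀ t ≤ k, ∀ x : X, |V x t vstar - V x t vbar| ≤ ε := by
  have key : ∀ d t, t + d = k → ∀ x : X, |V x t vstar - V x t vbar| ≤ ε := by
    intro d
    induction d with
    | zero =>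
      intro t ht x
      simp only [Nat.add_zero] at ht
      subst ht
      rw [hVk, hVk]
      have : vstar + ∑ w, p w * s x t w - (vbar + ∑ w, p w * s x t w) = vstar - vbar := by ring
      rw [this]; exact hclose
    | succ n ih =>
      intro t ht x
      have htk : t < k := by omega
      rw [hVt x t vstar htk, hVt x t vbar htk]
      apply min_abs_le
      · have : vstar + ∑ w, p w * s x t w - (vbar + ∑ w, p w * s x t w) = vstar - vbar := by
          ring
        rw [this]; exact hclose
      · apply inf'_abs_le
        intro u
        have heq : (∑ w, p w * (g x t u w + γ * V (h x t u w) (t + 1) vstar)) -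
            (∑ w, p w * (g x t u w + γ * V (h x t u w) (t + 1) vbar)) =
            γ * ∑ w, p w * (V (h x t u w) (t + 1) vstar - V (h x t u w) (t + 1) vbar) := by
          rw [Finset.mul_sum, ← Finset.sum_sub_distrib]
          congr 1; ext w; ring
        rw [heq, abs_mul, abs_of_nonneg hγ0]
        calc γ * |∑ w, p w * (V (h x t u w) (t + 1) vstar - V (h x t u w) (t + 1) vbar)|
            ≤ γ * ∑ w, p w * ε := by
              apply mul_le_mul_of_nonneg_left _ hγ0
              calc |∑ w, p w * (V (h x t u w) (t + 1) vstar - V (h x t u w) (t + 1) vbar)|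
                  ≤ ∑ w, |p w * (V (h x t u w) (t + 1) vstar - V (h x t u w) (t + 1) vbar)| :=
                    Finset.abs_sum_le_sum_abs _ _
                _ ≤ ∑ w, p w * ε := by
                    apply Finset.sum_le_sum
                    intro w _
                    rw [abs_mul, abs_of_nonneg (hp w)]
                    exact mul_le_mul_of_nonneg_left (ih (t + 1) (by omega) _) (hp w)
          _ = γ * ε := by rw [← Finset.sum_mul, hp1, one_mul]
          _ ≤ 1 * ε := mul_le_mul_of_nonneg_right hγ1.le hε
          _ = ε := one_mul ε
  intro t htk x
  exact key (k - t) t (by omega) x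
end

section
/- The map Υ : ℝ → ℝ has exactly one fixed point; that is, there exists a unique v̄ ∈ ℝ with Υ(v̄) = v̄. -/
private lemma inf'_abs_sub_le {α : Type*} [Fintype α] [Nonempty α]
    (f g : α → ℝ) (c : ℝ) (hfg : ∀ u, |f u - g u| ≤ c) :
    |Finset.univ.inf' Finset.univ_nonempty f - Finset.univ.inf' Finset.univ_nonempty g| ≤ c := by
  rw [abs_sub_le_iff]
  constructor
  · obtain ⟨u, -, hu⟩ := Finset.exists_mem_eq_inf' (Finset.univ_nonempty) g
    have h1 : Finset.univ.inf' Finset.univ_nonempty f ≤ f u := Finset.inf'_le _ (Finset.mem_univ u)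
    have h2 := (abs_le.mp (hfg u)).2
    linarith [hu.le, hu.ge]
  · obtain ⟨u, -, hu⟩ := Finset.exists_mem_eq_inf' (Finset.univ_nonempty) f
    have h1 : Finset.univ.inf' Finset.univ_nonempty g ≤ g u := Finset.inf'_le _ (Finset.mem_univ u)
    have h2 := (abs_le.mp (hfg u)).1
    linarith [hu.le, hu.ge]

/-- **Existence and uniqueness of the fixed point of `Υ`.** -/
theorem upsilon_unique_fixed_point
    {W : Type*} [Fintype W] [Nonempty W] (p : W → ℝ)
    (hp : ∀ w, 0 ≤ p w) (hp1 : ∑ w, p w = 1)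
    {X : Type*} (ζ : X)
    {U : Type*} [Fintype U] [Nonempty U]
    (k : ℕ) (hk : 1 ≤ k)
    (γ : ℝ) (hγ0 : 0 ≤ γ) (hγ1 : γ < 1)
    (h : X → ℕ → U → W → X)
    (g : X → ℕ → U → W → ℝ) (hg : ∀ x t u w, 0 ≤ g x t u w)
    (s : X → ℕ → W → ℝ) (hs : ∀ x t w, 0 ≤ s x t w)
    (hsζ : ∀ t w, s ζ t w = 0)
    (V : X → ℕ → ℝ → ℝ)
    (hVk : ∀ x v, V x k v = v + ∑ w, p w * s x k w)
    (hVt : ∀ x t v, t < k →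
      V x t v = min (v + ∑ w, p w * s x t w)
        (Finset.univ.inf' Finset.univ_nonempty
          (fun u : U => ∑ w, p w * (g x t u w + γ * V (h x t u w) (t + 1) v))))
    (Υ : ℝ → ℝ)
    (hΥ : ∀ v, Υ v = Finset.univ.inf' Finset.univ_nonempty
      (fun u : U => ∑ w, p w * (g ζ 0 u w + γ * V (h ζ 0 u w) 1 v)))
     :
    ∃! vbar : ℝ, Υ vbar = vbar := by
  -- Lipschitz bound for V in v, by downward induction
  have hsum : ∀ (x : X) (t : ℕ) (u : U) (v v' : ℝ),
      (∀ y, |V y (t+1) v - V y (t+1) v'| ≤ |v - v'|) →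
      |(∑ w, p w * (g x t u w + γ * V (h x t u w) (t + 1) v)) -
       (∑ w, p w * (g x t u w + γ * V (h x t u w) (t + 1) v'))| ≤ γ * |v - v'| := by
    intro x t u v v' hV1
    rw [← Finset.sum_sub_distrib]
    calc |∑ w, (p w * (g x t u w + γ * V (h x t u w) (t + 1) v) -
            p w * (g x t u w + γ * V (h x t u w) (t + 1) v'))|
        ≤ ∑ w, |p w * (g x t u w + γ * V (h x t u w) (t + 1) v) -
            p w * (g x t u w + γ * V (h x t u w) (t + 1) v')| :=
          Finset.abs_sum_le_sum_abs _ _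
      _ ≤ ∑ w, p w * (γ * |v - v'|) := by
          apply Finset.sum_le_sum
          intro w _
          have : p w * (g x t u w + γ * V (h x t u w) (t + 1) v) -
              p w * (g x t u w + γ * V (h x t u w) (t + 1) v')
              = p w * γ * (V (h x t u w) (t + 1) v - V (h x t u w) (t + 1) v') := by ring
          rw [this, abs_mul, abs_of_nonneg (mul_nonneg (hp w) hγ0), mul_assoc]
          exact mul_le_mul_of_nonneg_left
            (mul_le_mul_of_nonneg_left (hV1 _) hγ0) (hp w)
      _ = γ * |v - v'| := by rw [← Finset.sum_mul, hp1, one_mul]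
  have key : ∀ d : ℕ, d ≤ k → ∀ (x : X) (v v' : ℝ),
      |V x (k - d) v - V x (k - d) v'| ≤ |v - v'| := by
    intro d
    induction d with
    | zero =>
      intro _ x v v'
      simp only [Nat.sub_zero, hVk]
      simp
    | succ d ih =>
      intro hd x v v'
      have hd' : d ≤ k := Nat.le_of_succ_le hd
      have ht : k - (d + 1) < k := Nat.sub_lt (Nat.lt_of_lt_of_le (Nat.succ_pos d) hd) (Nat.succ_pos d)
      have ht1 : k - (d + 1) + 1 = k - d := by omega
      have hV1 : ∀ y : X, |V y (k - (d+1) + 1) v - V y (k - (d+1) + 1) v'| ≤ |v - v'| := by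
        intro y; rw [ht1]; exact ih hd' y v v'
      rw [hVt x _ v ht, hVt x _ v' ht]
      refine le_trans (abs_min_sub_min_le_max _ _ _ _) (max_le (by simp) ?_)
      exact inf'_abs_sub_le _ _ _ fun u =>
        le_trans (hsum x _ u v v' hV1) (by nlinarith [abs_nonneg (v - v')])
  have hV1 : ∀ (y : X) (v v' : ℝ), |V y 1 v - V y 1 v'| ≤ |v - v'| := by
    intro y v v'
    have h1 : (1 : ℕ) = k - (k - 1) := by omega
    rw [h1]; exact key (k - 1) (Nat.sub_le k 1) y v v'
  have hΥlip : ∀ v v', |Υ v - Υ v'| ≤ γ * |v - v'| := by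
    intro v v'
    rw [hΥ v, hΥ v']
    refine inf'_abs_sub_le _ _ _ fun u => ?_
    have := hsum ζ 0 u v v' (fun y => hV1 y v v')
    simpa using this
  -- contraction ⇒ unique fixed point
  have hcon : ContractingWith γ.toNNReal Υ := by
    constructor
    · exact Real.toNNReal_lt_one.mpr hγ1
    · intro a b
      rw [edist_dist, edist_dist, Real.dist_eq, Real.dist_eq]
      rw [← ENNReal.ofReal_coe_nnreal, Real.coe_toNNReal γ hγ0,
        ← ENNReal.ofReal_mul hγ0]
      exact ENNReal.ofReal_le_ofReal (hΥlip a b)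
  refine ⟨hcon.fixedPoint Υ, hcon.fixedPoint_isFixedPt, fun y hy => ?_⟩
  exact hcon.fixedPoint_unique hy
end

section
/- Let v̄ ∈ ℝ satisfy Υ(v̄) = v̄ and define J(x,t) := V(x,t,v̄) for x ∈ X and t ∈ {0,…,k}. Then J satisfies the dynamic programming (Bellman) equations of the reset control problem: (i) J(ζ,0) = v̄ = min_{u∈U} E[ g(ζ,0,u,·) + γ·J(h(ζ,0,u,·), 1) ]; (ii) for every x ∈ X and every t with 0 ≤ t < k, J(x,t) = min{ J(ζ,0) + E[s(x,t,·)], min_{u∈U} E[ g(x,t,u,·) + γ·J(h(x,t,u,·), t+1) ] }; and (iii) for every x ∈ X, J(x,k) = J(ζ,0) + E[s(x,k,·)]. -/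
/-- **Bellman equations.**  If `v̄` is a fixed point of `Υ` then `J(x,t) := V(x,t,v̄)`
satisfies the dynamic programming equations of the reset control problem. -/
theorem fixed_point_satisfies_bellman
    {W : Type*} [Fintype W] [Nonempty W] (p : W → ℝ)
    (hp : ∀ w, 0 ≤ p w) (hp1 : ∑ w, p w = 1)
    {X : Type*} (ζ : X)
    {U : Type*} [Fintype U] [Nonempty U]
    (k : ℕ) (hk : 1 ≤ k)
    (γ : ℝ) (hγ0 : 0 ≤ γ) (hγ1 : γ < 1)
    (h : X → ℕ → U → W → X)
    (g : X → ℕ → U → W → ℝ) (hg : ∀ x t u w, 0 ≤ g x t u w)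
    (s : X → ℕ → W → ℝ) (hs : ∀ x t w, 0 ≤ s x t w)
    (hsζ : ∀ t w, s ζ t w = 0)
    (V : X → ℕ → ℝ → ℝ)
    (hVk : ∀ x v, V x k v = v + ∑ w, p w * s x k w)
    (hVt : ∀ x t v, t < k →
      V x t v = min (v + ∑ w, p w * s x t w)
        (Finset.univ.inf' Finset.univ_nonempty
          (fun u : U => ∑ w, p w * (g x t u w + γ * V (h x t u w) (t + 1) v))))
    (Υ : ℝ → ℝ)
    (hΥ : ∀ v, Υ v = Finset.univ.inf' Finset.univ_nonempty
      (fun u : U => ∑ w, p w * (g ζ 0 u w + γ * V (h ζ 0 u w) 1 v)))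
    (vbar : ℝ) (hfix : Υ vbar = vbar) :
    (V ζ 0 vbar = vbar ∧
      vbar = Finset.univ.inf' Finset.univ_nonempty
        (fun u : U => ∑ w, p w * (g ζ 0 u w + γ * V (h ζ 0 u w) 1 vbar))) ∧
    (∀ x : X, ∀ t < k,
      V x t vbar = min (V ζ 0 vbar + ∑ w, p w * s x t w)
        (Finset.univ.inf' Finset.univ_nonempty
          (fun u : U => ∑ w, p w * (g x t u w + γ * V (h x t u w) (t + 1) vbar)))) ∧
    (∀ x : X, V x k vbar = V ζ 0 vbar + ∑ w, p w * s x k w) := by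
  have hsum : (∑ w, p w * s ζ 0 w) = 0 := by
    simp [hsζ]
  have hV0 : V ζ 0 vbar = vbar := by
    rw [hVt ζ 0 vbar hk, hsum, add_zero, ← hΥ, hfix, min_self]
  refine ⟨⟨hV0, ?_⟩, ?_, ?_⟩
  · conv_lhs => rw [← hfix, hΥ]
  · intro x t ht
    rw [hVt x t vbar ht, hV0]
  · intro x
    rw [hVk x vbar, hV0]
end

section
/- For every x ∈ X, every t ∈ {0,…,k}, and all v, v′ ∈ ℝ, |V(x,t,v) − V(x,t,v′)| ≤ |v − v′|; that is, each map v ↦ V(x,t,v) is 1-Lipschitz. -/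
lemma abs_inf'_sub_inf'_le {U : Type*} [Fintype U] [Nonempty U]
    (F G : U → ℝ) (M : ℝ) (hFG : ∀ u, |F u - G u| ≤ M) :
    |Finset.univ.inf' Finset.univ_nonempty F - Finset.univ.inf' Finset.univ_nonempty G| ≤ M := by
  rw [abs_sub_le_iff]
  constructor
  · obtain ⟨u, -, hu⟩ := Finset.exists_mem_eq_inf' (Finset.univ_nonempty (α := U)) G
    rw [hu, sub_le_iff_le_add]
    calc Finset.univ.inf' Finset.univ_nonempty F ≤ F u := Finset.inf'_le _ (Finset.mem_univ u)
      _ ≤ M + G u := by have := (abs_sub_le_iff.mp (hFG u)).1; linarith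
  · obtain ⟨u, -, hu⟩ := Finset.exists_mem_eq_inf' (Finset.univ_nonempty (α := U)) F
    rw [hu, sub_le_iff_le_add]
    calc Finset.univ.inf' Finset.univ_nonempty G ≤ G u := Finset.inf'_le _ (Finset.mem_univ u)
      _ ≤ M + F u := by have := (abs_sub_le_iff.mp (hFG u)).2; linarith

/-- **1-Lipschitz continuity in `v`.**  For every `x`, `t ∈ {0,…,k}`, and `v, v′`,
`|V(x,t,v) − V(x,t,v′)| ≤ |v − v′|`. -/
theorem V_one_lipschitz
    {W : Type*} [Fintype W] [Nonempty W] (p : W → ℝ)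
    (hp : ∀ w, 0 ≤ p w) (hp1 : ∑ w, p w = 1)
    {X : Type*} (ζ : X)
    {U : Type*} [Fintype U] [Nonempty U]
    (k : ℕ) (hk : 1 ≤ k)
    (γ : ℝ) (hγ0 : 0 ≤ γ) (hγ1 : γ < 1)
    (h : X → ℕ → U → W → X)
    (g : X → ℕ → U → W → ℝ) (hg : ∀ x t u w, 0 ≤ g x t u w)
    (s : X → ℕ → W → ℝ) (hs : ∀ x t w, 0 ≤ s x t w)
    (hsζ : ∀ t w, s ζ t w = 0)
    (V : X → ℕ → ℝ → ℝ)
    (hVk : ∀ x v, V x k v = v + ∑ w, p w * s x k w)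
    (hVt : ∀ x t v, t < k →
      V x t v = min (v + ∑ w, p w * s x t w)
        (Finset.univ.inf' Finset.univ_nonempty
          (fun u : U => ∑ w, p w * (g x t u w + γ * V (h x t u w) (t + 1) v))))
    (Υ : ℝ → ℝ)
    (hΥ : ∀ v, Υ v = Finset.univ.inf' Finset.univ_nonempty
      (fun u : U => ∑ w, p w * (g ζ 0 u w + γ * V (h ζ 0 u w) 1 v)))
     :
    ∀ x : X, ∀ t ≤ k, ∀ v v' : ℝ, |V x t v - V x t v'| ≤ |v - v'| := by
  have key : ∀ j : ℕ, ∀ t, t ≤ k → k - t = j → ∀ x : X, ∀ v v' : ℝ,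
      |V x t v - V x t v'| ≤ |v - v'| := by
    intro j
    induction j with
    | zero =>
      intro t ht h0 x v v'
      have htk : t = k := by omega
      subst htk
      rw [hVk, hVk]
      simp
    | succ n ih =>
      intro t ht h0 x v v'
      have htk : t < k := by omega
      have ih' : ∀ y v v', |V y (t+1) v - V y (t+1) v'| ≤ |v - v'| :=
        fun y v v' => ih (t+1) (by omega) (by omega) y v v'
      rw [hVt x t v htk, hVt x t v' htk]
      refine le_trans (abs_min_sub_min_le_max _ _ _ _) (max_le (by simp) ?_)
      refine abs_inf'_sub_inf'_le _ _ _ fun u => ?_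
      have heq : (∑ w, p w * (g x t u w + γ * V (h x t u w) (t + 1) v))
          - (∑ w, p w * (g x t u w + γ * V (h x t u w) (t + 1) v'))
          = ∑ w, p w * (γ * (V (h x t u w) (t+1) v - V (h x t u w) (t+1) v')) := by
        rw [← Finset.sum_sub_distrib]
        congr 1; funext w; ring
      rw [heq]
      calc |∑ w, p w * (γ * (V (h x t u w) (t+1) v - V (h x t u w) (t+1) v'))|
          ≤ ∑ w, |p w * (γ * (V (h x t u w) (t+1) v - V (h x t u w) (t+1) v'))| :=
            Finset.abs_sum_le_sum_abs _ _
        _ ≤ ∑ w, p w * |v - v'| := by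
            refine Finset.sum_le_sum fun w _ => ?_
            rw [abs_mul, abs_mul, abs_of_nonneg (hp w), abs_of_nonneg hγ0]
            calc p w * (γ * |V (h x t u w) (t+1) v - V (h x t u w) (t+1) v'|)
                ≤ p w * (γ * |v - v'|) :=
                  mul_le_mul_of_nonneg_left
                    (mul_le_mul_of_nonneg_left (ih' _ _ _) hγ0) (hp w)
              _ ≤ p w * (1 * |v - v'|) :=
                  mul_le_mul_of_nonneg_left
                    (mul_le_mul_of_nonneg_right hγ1.le (abs_nonneg _)) (hp w)
              _ = p w * |v - v'| := by ring
        _ = |v - v'| := by rw [← Finset.sum_mul, hp1, one_mul]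
  intro x t ht v v'
  exact key (k - t) t ht rfl x v v'
end

section
/- For all v, v′ ∈ ℝ, |Υ(v) − Υ(v′)| ≤ γ·|v − v′|; that is, Υ is a γ-contraction on ℝ. -/
/-- **`Υ` is a `γ`-contraction:** `|Υ(v) − Υ(v′)| ≤ γ·|v − v′|` for all `v, v′ ∈ ℝ`. -/
theorem upsilon_contraction
    {W : Type*} [Fintype W] [Nonempty W] (p : W → ℝ)
    (hp : ∀ w, 0 ≤ p w) (hp1 : ∑ w, p w = 1)
    {X : Type*} (ζ : X)
    {U : Type*} [Fintype U] [Nonempty U]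
    (k : ℕ) (hk : 1 ≤ k)
    (γ : ℝ) (hγ0 : 0 ≤ γ) (hγ1 : γ < 1)
    (h : X → ℕ → U → W → X)
    (g : X → ℕ → U → W → ℝ) (hg : ∀ x t u w, 0 ≤ g x t u w)
    (s : X → ℕ → W → ℝ) (hs : ∀ x t w, 0 ≤ s x t w)
    (hsζ : ∀ t w, s ζ t w = 0)
    (V : X → ℕ → ℝ → ℝ)
    (hVk : ∀ x v, V x k v = v + ∑ w, p w * s x k w)
    (hVt : ∀ x t v, t < k →
      V x t v = min (v + ∑ w, p w * s x t w)
        (Finset.univ.inf' Finset.univ_nonempty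
          (fun u : U => ∑ w, p w * (g x t u w + γ * V (h x t u w) (t + 1) v))))
    (Υ : ℝ → ℝ)
    (hΥ : ∀ v, Υ v = Finset.univ.inf' Finset.univ_nonempty
      (fun u : U => ∑ w, p w * (g ζ 0 u w + γ * V (h ζ 0 u w) 1 v)))
     :
    ∀ v v' : ℝ, |Υ v - Υ v'| ≤ γ * |v - v'| := by
  intro v v'
  -- helper: inf' difference bound
  have inf_lemma : ∀ (f f' : U → ℝ) (c : ℝ), (∀ u, |f u - f' u| ≤ c) →
      |Finset.univ.inf' Finset.univ_nonempty f - Finset.univ.inf' Finset.univ_nonempty f'| ≤ c := by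
    intro f f' c hc
    have half : ∀ (f f' : U → ℝ), (∀ u, |f u - f' u| ≤ c) →
        Finset.univ.inf' Finset.univ_nonempty f - Finset.univ.inf' Finset.univ_nonempty f' ≤ c := by
      intro f f' hc
      obtain ⟨u, -, hu⟩ := Finset.exists_mem_eq_inf' (Finset.univ_nonempty) f'
      have h1 : Finset.univ.inf' Finset.univ_nonempty f ≤ f u :=
        Finset.inf'_le _ (Finset.mem_univ u)
      have h2 : f u - f' u ≤ c := (le_abs_self _).trans (hc u)
      rw [hu]; linarith
    rw [abs_sub_le_iff]
    refine ⟨half f f' hc, half f' f fun u => ?_⟩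
    rw [abs_sub_comm]; exact hc u
  -- helper: sum difference bound
  have sum_lemma : ∀ (φ ψ : W → ℝ) (c : ℝ), 0 ≤ c → (∀ w, |φ w - ψ w| ≤ c) →
      |(∑ w, p w * φ w) - ∑ w, p w * ψ w| ≤ c := by
    intro φ ψ c hc0 hc
    have : (∑ w, p w * φ w) - ∑ w, p w * ψ w = ∑ w, p w * (φ w - ψ w) := by
      rw [← Finset.sum_sub_distrib]; congr 1; ext w; ring
    rw [this]
    calc |∑ w, p w * (φ w - ψ w)| ≤ ∑ w, |p w * (φ w - ψ w)| := Finset.abs_sum_le_sum_abs _ _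
      _ ≤ ∑ w, p w * c := by
          refine Finset.sum_le_sum fun w _ => ?_
          rw [abs_mul, abs_of_nonneg (hp w)]
          exact mul_le_mul_of_nonneg_left (hc w) (hp w)
      _ = c := by rw [← Finset.sum_mul, hp1, one_mul]
  -- key: |V x t v - V x t v'| ≤ |v - v'| for t ≤ k
  have key : ∀ n t x, t ≤ k → k - t ≤ n → |V x t v - V x t v'| ≤ |v - v'| := by
    intro n
    induction n with
    | zero =>
      intro t x ht hn
      have : t = k := le_antisymm ht (by omega)
      subst this
      rw [hVk, hVk]
      simp [add_sub_add_right_eq_sub]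
    | succ n ih =>
      intro t x ht hn
      rcases eq_or_lt_of_le ht with heq | hlt
      · subst heq
        rw [hVk, hVk]
        simp [add_sub_add_right_eq_sub]
      · rw [hVt x t v hlt, hVt x t v' hlt]
        refine (abs_min_sub_min_le_max _ _ _ _).trans (max_le ?_ ?_)
        · simp [add_sub_add_right_eq_sub]
        · refine inf_lemma _ _ _ fun u => ?_
          refine sum_lemma _ _ _ (abs_nonneg _) fun w => ?_
          have hrec : |V (h x t u w) (t+1) v - V (h x t u w) (t+1) v'| ≤ |v - v'| :=
            ih (t+1) _ (by omega) (by omega)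
          have : (g x t u w + γ * V (h x t u w) (t+1) v)
              - (g x t u w + γ * V (h x t u w) (t+1) v')
              = γ * (V (h x t u w) (t+1) v - V (h x t u w) (t+1) v') := by ring
          rw [this, abs_mul, abs_of_nonneg hγ0]
          calc γ * |V (h x t u w) (t+1) v - V (h x t u w) (t+1) v'| ≤ γ * |v - v'| :=
                mul_le_mul_of_nonneg_left hrec hγ0
            _ ≤ 1 * |v - v'| := mul_le_mul_of_nonneg_right hγ1.le (abs_nonneg _)
            _ = |v - v'| := one_mul _
  rw [hΥ v, hΥ v']
  refine inf_lemma _ _ _ fun u => ?_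
  refine sum_lemma _ _ _ (mul_nonneg hγ0 (abs_nonneg _)) fun w => ?_
  have hrec : |V (h ζ 0 u w) 1 v - V (h ζ 0 u w) 1 v'| ≤ |v - v'| :=
    key k 1 _ hk (by omega)
  have : (g ζ 0 u w + γ * V (h ζ 0 u w) 1 v) - (g ζ 0 u w + γ * V (h ζ 0 u w) 1 v')
      = γ * (V (h ζ 0 u w) 1 v - V (h ζ 0 u w) 1 v') := by ring
  rw [this, abs_mul, abs_of_nonneg hγ0]
  exact mul_le_mul_of_nonneg_left hrec hγ0
end

section
/- Any fixed point v̄ of Υ (i.e. Υ(v̄) = v̄) satisfies the upper bound v̄ ≤ (1/(1−γ)) · min_{u∈U} E_w[ g(ζ,0,u,w) + γ·E_{w′}[ s(h(ζ,0,u,w), 1, w′) ] ], where E_w and E_{w′} denote the expectation ∑ p(·)·(·) over independent copies of the noise. (This value is the upper endpoint J̄ of the initial binary-search bracket in the BiDS algorithm, so v̄ ∈ [0, J̄].) -/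
/-- **Upper bound on the fixed point.**  Any fixed point `v̄` of `Υ` satisfies
`v̄ ≤ (1/(1−γ)) · min_u E[ g(ζ,0,u,w) + γ·E[s(h(ζ,0,u,w),1,w′)] ]`, the upper
endpoint of the initial BiDS binary-search bracket. -/
theorem fixed_point_upper_bound
    {W : Type*} [Fintype W] [Nonempty W] (p : W → ℝ)
    (hp : ∀ w, 0 ≤ p w) (hp1 : ∑ w, p w = 1)
    {X : Type*} (ζ : X)
    {U : Type*} [Fintype U] [Nonempty U]
    (k : ℕ) (hk : 1 ≤ k)
    (γ : ℝ) (hγ0 : 0 ≤ γ) (hγ1 : γ < 1)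
    (h : X → ℕ → U → W → X)
    (g : X → ℕ → U → W → ℝ) (hg : ∀ x t u w, 0 ≤ g x t u w)
    (s : X → ℕ → W → ℝ) (hs : ∀ x t w, 0 ≤ s x t w)
    (hsζ : ∀ t w, s ζ t w = 0)
    (V : X → ℕ → ℝ → ℝ)
    (hVk : ∀ x v, V x k v = v + ∑ w, p w * s x k w)
    (hVt : ∀ x t v, t < k →
      V x t v = min (v + ∑ w, p w * s x t w)
        (Finset.univ.inf' Finset.univ_nonempty
          (fun u : U => ∑ w, p w * (g x t u w + γ * V (h x t u w) (t + 1) v))))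
    (Υ : ℝ → ℝ)
    (hΥ : ∀ v, Υ v = Finset.univ.inf' Finset.univ_nonempty
      (fun u : U => ∑ w, p w * (g ζ 0 u w + γ * V (h ζ 0 u w) 1 v)))
    (vbar : ℝ) (hfix : Υ vbar = vbar) :
    vbar ≤ (1 / (1 - γ)) *
      Finset.univ.inf' Finset.univ_nonempty
        (fun u : U => ∑ w, p w *
          (g ζ 0 u w + γ * ∑ w', p w' * s (h ζ 0 u w) 1 w')) := by
  -- V x 1 vbar ≤ vbar + ∑ p w * s x 1 w
  have hV1 : ∀ x : X, V x 1 vbar ≤ vbar + ∑ w, p w * s x 1 w := by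
    intro x
    rcases eq_or_lt_of_le hk with hk1 | hk1
    · rw [← hk1] at hVk; rw [hVk]
    · rw [hVt x 1 vbar hk1]; exact min_le_left _ _
  set J := Finset.univ.inf' Finset.univ_nonempty
      (fun u : U => ∑ w, p w * (g ζ 0 u w + γ * ∑ w', p w' * s (h ζ 0 u w) 1 w')) with hJ
  obtain ⟨u0, -, hu0⟩ := Finset.exists_mem_eq_inf' (Finset.univ_nonempty)
      (fun u : U => ∑ w, p w * (g ζ 0 u w + γ * ∑ w', p w' * s (h ζ 0 u w) 1 w'))
  have key : vbar ≤ J + γ * vbar := by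
    calc vbar = Υ vbar := hfix.symm
    _ ≤ ∑ w, p w * (g ζ 0 u0 w + γ * V (h ζ 0 u0 w) 1 vbar) := by
        rw [hΥ]; exact Finset.inf'_le _ (Finset.mem_univ u0)
    _ ≤ ∑ w, p w * (g ζ 0 u0 w + γ * (vbar + ∑ w', p w' * s (h ζ 0 u0 w) 1 w')) := by
        apply Finset.sum_le_sum
        intro w _
        apply mul_le_mul_of_nonneg_left _ (hp w)
        apply add_le_add_right
        exact mul_le_mul_of_nonneg_left (hV1 _) hγ0
    _ = (∑ w, p w * (g ζ 0 u0 w + γ * ∑ w', p w' * s (h ζ 0 u0 w) 1 w')) + γ * vbar := by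
        have e : ∀ w : W, p w * (g ζ 0 u0 w + γ * (vbar + ∑ w', p w' * s (h ζ 0 u0 w) 1 w'))
            = p w * (g ζ 0 u0 w + γ * ∑ w', p w' * s (h ζ 0 u0 w) 1 w') + p w * (γ * vbar) := by
          intro w; ring
        rw [Finset.sum_congr rfl (fun w _ => e w), Finset.sum_add_distrib,
          ← Finset.sum_mul, hp1, one_mul]
    _ = J + γ * vbar := by rw [hJ, ← hu0]
  have h1γ : 0 < 1 - γ := by linarith
  rw [div_mul_eq_mul_div, one_mul, le_div_iff₀ h1γ]
  nlinarith [key]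
end
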